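/- Let K be a field of characteristic ≠ 2 and let Disc(t) = c₀' + c₁'t + c₂'t² be a quadratic polynomial over K. Suppose t ∈ K with Disc(t) = w² for some nonzero w ∈ K, and set c₁ = Disc'(t)/Disc(t), c₂ = Disc''(t)/(2·Disc(t)). If u ∈ K satisfies u² ≠ c₂, then δ = (c₁ − 2u)/(u² − c₂) satisfies Disc(t + δ) = (w(δu + 1))², i.e., Disc(t+δ) is a square in K. -/

import Mathlib

set_option maxRecDepth 8000
set_option maxHeartbeats 1600000


theorem disc_square_propagates (K : Type*) [Field K] (h2 : (2 : K) ≠ 0)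
    (c₀' c₁' c₂' t w u : K) (hw : w ≠ 0)
    (ht : c₀' + c₁' * t + c₂' * t ^ 2 = w ^ 2)
    (hu : u ^ 2 ≠ c₂' / (c₀' + c₁' * t + c₂' * t ^ 2)) :
    c₀' + c₁' * (t + ((c₁' + 2 * c₂' * t) / (c₀' + c₁' * t + c₂' * t ^ 2) - 2 * u) /
          (u ^ 2 - c₂' / (c₀' + c₁' * t + c₂' * t ^ 2))) +
        c₂' * (t + ((c₁' + 2 * c₂' * t) / (c₀' + c₁' * t + c₂' * t ^ 2) - 2 * u) /
          (u ^ 2 - c₂' / (c₀' + c₁' * t + c₂' * t ^ 2))) ^ 2 =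
      (w * (((c₁' + 2 * c₂' * t) / (c₀' + c₁' * t + c₂' * t ^ 2) - 2 * u) /
          (u ^ 2 - c₂' / (c₀' + c₁' * t + c₂' * t ^ 2)) * u + 1)) ^ 2 := by
  have hD : c₀' + c₁' * t + c₂' * t ^ 2 ≠ 0 := by
    rw [ht]; exact pow_ne_zero 2 hw
  have hE : u ^ 2 * (c₀' + c₁' * t + c₂' * t ^ 2) - c₂' ≠ 0 := by
    intro h
    exact hu (by rw [eq_div_iff hD]; linear_combination h)
  have key : ((c₁' + 2 * c₂' * t) / (c₀' + c₁' * t + c₂' * t ^ 2) - 2 * u) /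
      (u ^ 2 - c₂' / (c₀' + c₁' * t + c₂' * t ^ 2)) =
      ((c₁' + 2 * c₂' * t) - 2 * u * (c₀' + c₁' * t + c₂' * t ^ 2)) /
      (u ^ 2 * (c₀' + c₁' * t + c₂' * t ^ 2) - c₂') := by
    have hden : u ^ 2 - c₂' / (c₀' + c₁' * t + c₂' * t ^ 2) ≠ 0 := sub_ne_zero.mpr hu
    rw [div_eq_div_iff hden hE]
    field_simp
  rw [key, mul_pow, ← ht]
  generalize hDD : c₀' + c₁' * t + c₂' * t ^ 2 = D at hE ⊢
  field_simp
  subst hDD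
  ring
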